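/- Let v be a stem in a forest T, let R be the set of leaf neighbors of v, and let r = |R| ≥ 1. Then s̊(T) ≤ s̊(T − R) + r + u_r. -/

import Mathlib

variable {V : Type} [Fintype V] [DecidableEq V]

/-- The `k`-th triangular number `t_k = C(k+1,2)`. -/
def tri (k : ℕ) : ℕ := (k + 1).choose 2

/-- A natural number is triangular if it equals `t_k` for some `k`. -/
def IsTriangular (m : ℕ) : Prop := ∃ k, m = tri k

/-- `uval r = max {k : t_k ≤ r}`. -/
def uval (r : ℕ) : ℕ := Nat.findGreatest (fun k => tri k ≤ r) r

open Classical in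
/-- Sum-color cost (optimal total score of the slow-coloring game) of the subgraph
of `G` induced by `S`: it is `0` when there are no vertices, and otherwise the maximum
over nonempty marked sets `M ⊆ S` of `|M|` plus the minimum over nonempty independent
subsets `I ⊆ M` of the sum-color cost of the graph with `I` deleted. -/
noncomputable def scost (G : SimpleGraph V) (S : Finset V) : ℕ :=
  if S = ∅ then 0
  else
    (S.powerset.erase ∅).attach.sup fun M =>
      M.1.card +
      WithBot.unbotD 0
        ((((M.1.powerset.erase ∅).filter
              fun I => ∀ x ∈ I, ∀ y ∈ I, ¬ G.Adj x y).attach.image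
            fun I => scost G (S \ I.1)).min)
termination_by S.card
decreasing_by
  · have hI := I.2
    have hM := M.2
    simp only [Finset.mem_filter, Finset.mem_erase, Finset.mem_powerset] at hI hM
    have hsub : I.1 ⊆ S := hI.1.2.trans hM.2
    have hne : I.1.Nonempty := Finset.nonempty_iff_ne_empty.mpr hI.1.1
    exact Finset.card_lt_card (Finset.sdiff_ssubset hsub hne)

/-- A vertex is a leaf if it has exactly one neighbor. -/
def IsLeaf (G : SimpleGraph V) (v : V) : Prop := (G.neighborSet v).ncard = 1

/-- A stem in a forest: a vertex with at least one leaf neighbor and at most one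
non-leaf neighbor. -/
def IsStem (G : SimpleGraph V) (v : V) : Prop :=
  (∃ w, G.Adj v w ∧ IsLeaf G w) ∧ {w | G.Adj v w ∧ ¬ IsLeaf G w}.ncard ≤ 1


lemma tri_succ (u : ℕ) : tri (u+1) = tri u + (u+1) := by
  have h : (u+2).choose 2 = (u+1).choose 1 + (u+1).choose 2 := Nat.choose_succ_succ (u+1) 1
  simp only [Nat.choose_one_right] at h
  show (u+2).choose 2 = (u+1).choose 2 + (u+1)
  omega

lemma le_tri (k : ℕ) : k ≤ tri k := by
  induction k with
  | zero => simp [tri]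
  | succ n ih => rw [tri_succ]; omega

lemma tri_mono {i j : ℕ} (h : i ≤ j) : tri i ≤ tri j :=
  Nat.choose_le_choose 2 (by omega)

lemma tri_uval_le (r : ℕ) : tri (uval r) ≤ r :=
  Nat.findGreatest_spec (P := fun k => tri k ≤ r) (Nat.zero_le r) (by simp [tri])

lemma lt_tri_uval_succ (r : ℕ) : r < tri (uval r + 1) := by
  by_contra h
  push_neg at h
  have h2 : uval r + 1 ≤ r := le_trans (le_tri _) h
  have h3 := Nat.le_findGreatest (P := fun k => tri k ≤ r) h2 h
  simp only [uval] at h3 ⊢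
  omega

lemma uval_mono {r s : ℕ} (h : r ≤ s) : uval r ≤ uval s := by
  apply Nat.le_findGreatest (P := fun k => tri k ≤ s) (le_trans (Nat.findGreatest_le r) h)
  exact le_trans (tri_uval_le r) h

lemma uval_dichotomy {a k : ℕ} (h : a ≤ k) : a ≤ uval k ∨ uval (k - a) < uval k := by
  by_cases ha : a ≤ uval k
  · exact Or.inl ha
  · right
    push_neg at ha
    set u := uval k with hu
    have hk1 : k < tri u + (u + 1) := by rw [← tri_succ]; exact lt_tri_uval_succ k
    have hka : k - a < tri u := by omega
    by_contra hcon
    push_neg at hcon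
    have := le_trans (tri_mono hcon) (tri_uval_le (k - a))
    omega

lemma unbot'_min_le {s : Finset ℕ} {x : ℕ} (hx : x ∈ s) : WithBot.unbotD 0 s.min ≤ x := by
  have hne : s.Nonempty := ⟨x, hx⟩
  have h1 : s.min = ↑(s.min' hne) := (Finset.coe_min' hne).symm
  rw [h1]
  exact Finset.min'_le s x hx

lemma scost_empty (G : SimpleGraph V) : scost G ∅ = 0 := by rw [scost]; simp

lemma scost_le {G : SimpleGraph V} {S : Finset V} {B : ℕ}
    (h : ∀ M : Finset V, M ⊆ S → M ≠ ∅ →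
      ∃ I : Finset V, I ≠ ∅ ∧ I ⊆ M ∧ (∀ x ∈ I, ∀ y ∈ I, ¬ G.Adj x y) ∧
        M.card + scost G (S \ I) ≤ B) :
    scost G S ≤ B := by
  classical
  by_cases hS : S = ∅
  · rw [hS, scost_empty]; exact Nat.zero_le B
  rw [scost, if_neg hS]
  apply Finset.sup_le
  intro M _
  have hM := M.2
  simp only [Finset.mem_erase, Finset.mem_powerset] at hM
  obtain ⟨I, hIne, hIM, hind, hle⟩ := h M.1 hM.2 hM.1
  have hImem : I ∈ (M.1.powerset.erase ∅).filter
      (fun I => ∀ x ∈ I, ∀ y ∈ I, ¬ G.Adj x y) := by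
    simp only [Finset.mem_filter, Finset.mem_erase, Finset.mem_powerset]
    exact ⟨⟨hIne, hIM⟩, hind⟩
  refine le_trans (add_le_add_right ?_ M.1.card) hle
  exact unbot'_min_le (Finset.mem_image_of_mem _ (Finset.mem_attach _ ⟨I, hImem⟩))

lemma scost_resp {G : SimpleGraph V} {S M : Finset V} (hMS : M ⊆ S) (hMne : M ≠ ∅) :
    ∃ I : Finset V, I ≠ ∅ ∧ I ⊆ M ∧ (∀ x ∈ I, ∀ y ∈ I, ¬ G.Adj x y) ∧
      M.card + scost G (S \ I) ≤ scost G S := by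
  classical
  have hS : S ≠ ∅ := fun h => hMne (Finset.subset_empty.mp (h ▸ hMS))
  obtain ⟨x, hx⟩ := Finset.nonempty_iff_ne_empty.mpr hMne
  have hxmem : ({x} : Finset V) ∈ (M.powerset.erase ∅).filter
      fun I => ∀ x ∈ I, ∀ y ∈ I, ¬ G.Adj x y := by
    simp only [Finset.mem_filter, Finset.mem_erase, Finset.mem_powerset]
    refine ⟨⟨Finset.singleton_ne_empty x, Finset.singleton_subset_iff.mpr hx⟩, ?_⟩
    intro a ha b hb
    simp only [Finset.mem_singleton] at ha hb
    subst ha; subst hb; exact G.irrefl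
  have hfne : (((M.powerset.erase ∅).filter
        (fun I => ∀ x ∈ I, ∀ y ∈ I, ¬ G.Adj x y)).attach.image
      fun I => scost G (S \ I.1)).Nonempty :=
    ⟨scost G (S \ ({x} : Finset V)),
      Finset.mem_image_of_mem _ (Finset.mem_attach _ ⟨_, hxmem⟩)⟩
  set img := ((M.powerset.erase ∅).filter
        (fun I => ∀ x ∈ I, ∀ y ∈ I, ¬ G.Adj x y)).attach.image
      (fun I => scost G (S \ I.1)) with himg
  obtain ⟨I, _, hIeq⟩ := Finset.mem_image.mp (Finset.min'_mem img hfne)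
  have hI2 := I.2
  simp only [Finset.mem_filter, Finset.mem_erase, Finset.mem_powerset] at hI2
  refine ⟨I.1, hI2.1.1, hI2.1.2, hI2.2, ?_⟩
  have hsup : M.card + WithBot.unbotD 0 img.min ≤ scost G S := by
    rw [scost, if_neg hS]
    have hMmem : M ∈ S.powerset.erase ∅ := by
      simp only [Finset.mem_erase, Finset.mem_powerset]; exact ⟨hMne, hMS⟩
    exact Finset.le_sup (f := fun M' => M'.1.card + WithBot.unbotD 0
      ((((M'.1.powerset.erase ∅).filter
            fun I => ∀ x ∈ I, ∀ y ∈ I, ¬ G.Adj x y).attach.image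
          fun I => scost G (S \ I.1)).min)) (Finset.mem_attach _ ⟨M, hMmem⟩)
  have hmineq : WithBot.unbotD 0 img.min = scost G (S \ I.1) := by
    rw [← Finset.coe_min' hfne, hIeq]
    rfl
  omega

lemma indep_union_leaves {G : SimpleGraph V} {v : V} {R A I' : Finset V}
    (hpend : ∀ w ∈ R, ∀ x, G.Adj w x ↔ x = v) (hvR : v ∉ R)
    (hA : A ⊆ R) (hvI' : v ∉ I')
    (hI'ind : ∀ x ∈ I', ∀ y ∈ I', ¬ G.Adj x y) :
    ∀ x ∈ I' ∪ A, ∀ y ∈ I' ∪ A, ¬ G.Adj x y := by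
  intro x hx y hy hadj
  rcases Finset.mem_union.mp hx with hx' | hx' <;>
    rcases Finset.mem_union.mp hy with hy' | hy'
  · exact hI'ind x hx' y hy' hadj
  · have : x = v := (hpend y (hA hy') x).mp (G.adj_symm hadj)
    exact hvI' (this ▸ hx')
  · have : y = v := (hpend x (hA hx') y).mp hadj
    exact hvI' (this ▸ hy')
  · have : y = v := (hpend x (hA hx') y).mp hadj
    exact hvR (this ▸ hA hy')

lemma indep_leaves {G : SimpleGraph V} {v : V} {R A : Finset V}
    (hpend : ∀ w ∈ R, ∀ x, G.Adj w x ↔ x = v) (hvR : v ∉ R) (hA : A ⊆ R) :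
    ∀ x ∈ A, ∀ y ∈ A, ¬ G.Adj x y := by
  intro x hx y hy hadj
  have : y = v := (hpend x (hA hx) y).mp hadj
  exact hvR (this ▸ hA hy)

lemma key (G : SimpleGraph V) (v : V) (R : Finset V)
    (hpend : ∀ w ∈ R, ∀ x, G.Adj w x ↔ x = v) (S : Finset V) :
    scost G S ≤ scost G (S \ R) + (S ∩ R).card +
      (if v ∈ S then uval (S ∩ R).card else 0) := by
  have hvR : v ∉ R := fun h => G.irrefl ((hpend v h v).mpr rfl)
  induction S using Finset.strongInduction with
  | _ S IH =>
  apply scost_le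
  intro M hMS hMne
  have hAsub : M ∩ R ⊆ S ∩ R := Finset.inter_subset_inter hMS (le_refl R)
  have hAR : M ∩ R ⊆ R := Finset.inter_subset_right
  have hak : (M ∩ R).card ≤ (S ∩ R).card := Finset.card_le_card hAsub
  have hcardM : (M \ R).card + (M ∩ R).card = M.card :=
    Finset.card_sdiff_add_card_inter M R
  have hM'S : M \ R ⊆ S \ R := Finset.sdiff_subset_sdiff hMS (le_refl R)
  by_cases hvM : v ∈ M
  case pos =>
    -- v is marked; v ∈ S
    have hvS : v ∈ S := hMS hvM
    have hvM' : v ∈ M \ R := Finset.mem_sdiff.mpr ⟨hvM, hvR⟩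
    have hM'ne : M \ R ≠ ∅ := fun h => by simp [h] at hvM'
    rcases uval_dichotomy hak with hau | hlt
    · -- few marked leaves: play the auxiliary game on M \ R
      obtain ⟨I', hI'ne, hI'M', hI'ind, hI'le⟩ := scost_resp hM'S hM'ne
      have hI'S : I' ⊆ S := fun x hx => (Finset.mem_sdiff.mp (hM'S (hI'M' hx))).1
      have hI'R : ∀ x ∈ I', x ∉ R := fun x hx => (Finset.mem_sdiff.mp (hI'M' hx)).2
      by_cases hvI' : v ∈ I'
      · -- Painter colors v (and I'); marked leaves wasted, but a ≤ u
        refine ⟨I', hI'ne, fun x hx => Finset.sdiff_subset (hI'M' hx), hI'ind, ?_⟩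
        have hss : S \ I' ⊂ S :=
          Finset.sdiff_ssubset hI'S (Finset.nonempty_iff_ne_empty.mpr hI'ne)
        have hIH := IH (S \ I') hss
        have e1 : (S \ I') \ R = (S \ R) \ I' := sdiff_right_comm S I' R
        have e2 : (S \ I') ∩ R = S ∩ R := by
          ext x
          have h1 : x ∈ I' → x ∉ R := hI'R x
          simp only [Finset.mem_sdiff, Finset.mem_inter]
          tauto
        have hvT : v ∉ S \ I' := fun h => (Finset.mem_sdiff.mp h).2 hvI'
        rw [e1, e2, if_neg hvT] at hIH
        rw [if_pos hvS]
        omega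
      · -- Painter colors I' together with all marked leaves
        refine ⟨I' ∪ (M ∩ R), ?_, ?_, indep_union_leaves hpend hvR hAR hvI' hI'ind, ?_⟩
        · intro h
          exact hI'ne (Finset.union_eq_empty.mp h).1
        · exact Finset.union_subset (fun x hx => Finset.sdiff_subset (hI'M' hx))
            Finset.inter_subset_left
        have hIsubS : I' ∪ (M ∩ R) ⊆ S :=
          Finset.union_subset hI'S (fun x hx => hMS (Finset.mem_inter.mp hx).1)
        have hss : S \ (I' ∪ (M ∩ R)) ⊂ S := Finset.sdiff_ssubset hIsubS
          ⟨_, Finset.mem_union_left _ (Finset.nonempty_iff_ne_empty.mpr hI'ne).choose_spec⟩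
        have hIH := IH _ hss
        have e1 : (S \ (I' ∪ (M ∩ R))) \ R = (S \ R) \ I' := by
          ext x
          have h1 : x ∈ M ∩ R → x ∈ R := fun h => hAR h
          simp only [Finset.mem_sdiff, Finset.mem_union]
          tauto
        have e2 : (S \ (I' ∪ (M ∩ R))) ∩ R = (S ∩ R) \ (M ∩ R) := by
          ext x
          have h1 : x ∈ I' → x ∉ R := hI'R x
          simp only [Finset.mem_sdiff, Finset.mem_inter, Finset.mem_union]
          tauto
        have hvT : v ∈ S \ (I' ∪ (M ∩ R)) := by
          simp only [Finset.mem_sdiff, Finset.mem_union]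
          exact ⟨hvS, fun h => h.elim hvI' (fun h' => hvR (hAR h'))⟩
        have hc : ((S ∩ R) \ (M ∩ R)).card = (S ∩ R).card - (M ∩ R).card :=
          Finset.card_sdiff_of_subset hAsub
        rw [e1, e2, hc, if_pos hvT] at hIH
        have hmono : uval ((S ∩ R).card - (M ∩ R).card) ≤ uval (S ∩ R).card :=
          uval_mono (Nat.sub_le _ _)
        rw [if_pos hvS]
        omega
    · -- many marked leaves: absorb the mark on v, color all marked leaves
      have hane : (M ∩ R).card ≠ 0 := by
        intro h
        rw [h, Nat.sub_zero] at hlt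
        omega
      have hAne : M ∩ R ≠ ∅ := fun h => hane (by rw [h]; rfl)
      by_cases hM'' : (M \ R).erase v = ∅
      · -- M = {v} ∪ (M ∩ R): color just the leaves
        refine ⟨M ∩ R, hAne, Finset.inter_subset_left, indep_leaves hpend hvR hAR, ?_⟩
        have hIsubS : M ∩ R ⊆ S := fun x hx => hMS (Finset.mem_inter.mp hx).1
        have hss : S \ (M ∩ R) ⊂ S :=
          Finset.sdiff_ssubset hIsubS (Finset.nonempty_iff_ne_empty.mpr hAne)
        have hIH := IH _ hss
        have e1 : (S \ (M ∩ R)) \ R = S \ R := by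
          ext x
          have h1 : x ∈ M ∩ R → x ∈ R := fun h => hAR h
          simp only [Finset.mem_sdiff]
          tauto
        have e2 : (S \ (M ∩ R)) ∩ R = (S ∩ R) \ (M ∩ R) := by
          ext x
          simp only [Finset.mem_sdiff, Finset.mem_inter]
          tauto
        have hvT : v ∈ S \ (M ∩ R) := by
          simp only [Finset.mem_sdiff, Finset.mem_inter]
          exact ⟨hvS, fun h => hvR h.2⟩
        have hc : ((S ∩ R) \ (M ∩ R)).card = (S ∩ R).card - (M ∩ R).card :=
          Finset.card_sdiff_of_subset hAsub
        have hM'card : (M \ R).card = 1 := by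
          have := Finset.card_erase_of_mem hvM'
          rw [hM''] at this
          simp only [Finset.card_empty] at this
          have hpos : 0 < (M \ R).card := Finset.card_pos.mpr ⟨v, hvM'⟩
          omega
        rw [e1, e2, hc, if_pos hvT] at hIH
        rw [if_pos hvS]
        omega
      · -- respond in the auxiliary game to the marks other than v, color leaves too
        have hM''sub : (M \ R).erase v ⊆ S \ R :=
          fun x hx => hM'S (Finset.erase_subset _ _ hx)
        obtain ⟨I'', hI''ne, hI''M'', hI''ind, hI''le⟩ := scost_resp hM''sub hM''
        have hvI'' : v ∉ I'' := fun h => Finset.notMem_erase v _ (hI''M'' h)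
        have hI''S : I'' ⊆ S := fun x hx => (Finset.mem_sdiff.mp (hM''sub (hI''M'' hx))).1
        have hI''R : ∀ x ∈ I'', x ∉ R :=
          fun x hx => (Finset.mem_sdiff.mp (Finset.erase_subset _ _ (hI''M'' hx))).2
        refine ⟨I'' ∪ (M ∩ R), ?_, ?_, indep_union_leaves hpend hvR hAR hvI'' hI''ind, ?_⟩
        · intro h
          exact hI''ne (Finset.union_eq_empty.mp h).1
        · refine Finset.union_subset ?_ Finset.inter_subset_left
          exact fun x hx => Finset.sdiff_subset (Finset.erase_subset _ _ (hI''M'' hx))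
        have hIsubS : I'' ∪ (M ∩ R) ⊆ S :=
          Finset.union_subset hI''S (fun x hx => hMS (Finset.mem_inter.mp hx).1)
        have hss : S \ (I'' ∪ (M ∩ R)) ⊂ S := Finset.sdiff_ssubset hIsubS
          ⟨_, Finset.mem_union_left _ (Finset.nonempty_iff_ne_empty.mpr hI''ne).choose_spec⟩
        have hIH := IH _ hss
        have e1 : (S \ (I'' ∪ (M ∩ R))) \ R = (S \ R) \ I'' := by
          ext x
          have h1 : x ∈ M ∩ R → x ∈ R := fun h => hAR h
          simp only [Finset.mem_sdiff, Finset.mem_union]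
          tauto
        have e2 : (S \ (I'' ∪ (M ∩ R))) ∩ R = (S ∩ R) \ (M ∩ R) := by
          ext x
          have h1 : x ∈ I'' → x ∉ R := hI''R x
          simp only [Finset.mem_sdiff, Finset.mem_inter, Finset.mem_union]
          tauto
        have hvT : v ∈ S \ (I'' ∪ (M ∩ R)) := by
          simp only [Finset.mem_sdiff, Finset.mem_union]
          exact ⟨hvS, fun h => h.elim hvI'' (fun h' => hvR (hAR h'))⟩
        have hc : ((S ∩ R) \ (M ∩ R)).card = (S ∩ R).card - (M ∩ R).card :=
          Finset.card_sdiff_of_subset hAsub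
        have hM''card : ((M \ R).erase v).card = (M \ R).card - 1 :=
          Finset.card_erase_of_mem hvM'
        have hM'pos : 0 < (M \ R).card := Finset.card_pos.mpr ⟨v, hvM'⟩
        rw [e1, e2, hc, if_pos hvT] at hIH
        rw [hM''card] at hI''le
        rw [if_pos hvS]
        omega
  case neg =>
    -- v is not marked
    by_cases hM' : M \ R = ∅
    · -- all marks are on leaves: color them all
      have hMR : M ⊆ R := fun x hx => by
        by_contra hxR
        exact (Finset.notMem_empty x) (hM' ▸ Finset.mem_sdiff.mpr ⟨hx, hxR⟩)
      refine ⟨M, hMne, le_refl M, indep_leaves hpend hvR hMR, ?_⟩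
      have hss : S \ M ⊂ S :=
        Finset.sdiff_ssubset hMS (Finset.nonempty_iff_ne_empty.mpr hMne)
      have hIH := IH _ hss
      have e1 : (S \ M) \ R = S \ R := by
        ext x
        have h1 : x ∈ M → x ∈ R := fun h => hMR h
        simp only [Finset.mem_sdiff]
        tauto
      have e2 : (S \ M) ∩ R = (S ∩ R) \ M := by
        ext x
        simp only [Finset.mem_sdiff, Finset.mem_inter]
        tauto
      have hMSR : M ⊆ S ∩ R := fun x hx => Finset.mem_inter.mpr ⟨hMS hx, hMR hx⟩
      have hc : ((S ∩ R) \ M).card = (S ∩ R).card - M.card := Finset.card_sdiff_of_subset hMSR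
      have hMk : M.card ≤ (S ∩ R).card := Finset.card_le_card hMSR
      have hvT : (v ∈ S \ M) ↔ (v ∈ S) := by
        simp only [Finset.mem_sdiff]
        exact ⟨fun h => h.1, fun h => ⟨h, hvM⟩⟩
      rw [e1, e2, hc] at hIH
      have hmono : uval ((S ∩ R).card - M.card) ≤ uval (S ∩ R).card :=
        uval_mono (Nat.sub_le _ _)
      by_cases hvS : v ∈ S
      · rw [if_pos (hvT.mpr hvS)] at hIH
        rw [if_pos hvS]
        omega
      · rw [if_neg (fun h => hvS (hvT.mp h))] at hIH
        rw [if_neg hvS]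
        omega
    · -- respond in the auxiliary game to M \ R, color marked leaves too
      obtain ⟨I', hI'ne, hI'M', hI'ind, hI'le⟩ := scost_resp hM'S hM'
      have hI'S : I' ⊆ S := fun x hx => (Finset.mem_sdiff.mp (hM'S (hI'M' hx))).1
      have hI'R : ∀ x ∈ I', x ∉ R := fun x hx => (Finset.mem_sdiff.mp (hI'M' hx)).2
      have hvI' : v ∉ I' := fun h => hvM (Finset.sdiff_subset (hI'M' h))
      refine ⟨I' ∪ (M ∩ R), ?_, ?_, indep_union_leaves hpend hvR hAR hvI' hI'ind, ?_⟩
      · intro h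
        exact hI'ne (Finset.union_eq_empty.mp h).1
      · exact Finset.union_subset (fun x hx => Finset.sdiff_subset (hI'M' hx))
          Finset.inter_subset_left
      have hIsubS : I' ∪ (M ∩ R) ⊆ S :=
        Finset.union_subset hI'S (fun x hx => hMS (Finset.mem_inter.mp hx).1)
      have hss : S \ (I' ∪ (M ∩ R)) ⊂ S := Finset.sdiff_ssubset hIsubS
        ⟨_, Finset.mem_union_left _ (Finset.nonempty_iff_ne_empty.mpr hI'ne).choose_spec⟩
      have hIH := IH _ hss
      have e1 : (S \ (I' ∪ (M ∩ R))) \ R = (S \ R) \ I' := by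
        ext x
        have h1 : x ∈ M ∩ R → x ∈ R := fun h => hAR h
        simp only [Finset.mem_sdiff, Finset.mem_union]
        tauto
      have e2 : (S \ (I' ∪ (M ∩ R))) ∩ R = (S ∩ R) \ (M ∩ R) := by
        ext x
        have h1 : x ∈ I' → x ∉ R := hI'R x
        simp only [Finset.mem_sdiff, Finset.mem_inter, Finset.mem_union]
        tauto
      have hc : ((S ∩ R) \ (M ∩ R)).card = (S ∩ R).card - (M ∩ R).card :=
        Finset.card_sdiff_of_subset hAsub
      have hvT : (v ∈ S \ (I' ∪ (M ∩ R))) ↔ (v ∈ S) := by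
        simp only [Finset.mem_sdiff, Finset.mem_union]
        exact ⟨fun h => h.1, fun h => ⟨h, fun hc' => hc'.elim hvI' (fun h' => hvR (hAR h'))⟩⟩
      rw [e1, e2, hc] at hIH
      have hmono : uval ((S ∩ R).card - (M ∩ R).card) ≤ uval (S ∩ R).card :=
        uval_mono (Nat.sub_le _ _)
      by_cases hvS : v ∈ S
      · rw [if_pos (hvT.mpr hvS)] at hIH
        rw [if_pos hvS]
        omega
      · rw [if_neg (fun h => hvS (hvT.mp h))] at hIH
        rw [if_neg hvS]
        omega

/-- If `v` is a stem in a forest `T` with `r ≥ 1` leaf neighbors (forming the set `R`),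
then `s̊(T) ≤ s̊(T - R) + r + u_r`. -/
theorem stmt8 (G : SimpleGraph V) (hG : G.IsAcyclic) (v : V) (R : Finset V)
    (hv : IsStem G v) (hR : ∀ w, w ∈ R ↔ (G.Adj v w ∧ IsLeaf G w)) (hr : 1 ≤ R.card) :
    scost G Finset.univ ≤ scost G (Finset.univ \ R) + R.card + uval R.card := by
  have hpend : ∀ w ∈ R, ∀ x, G.Adj w x ↔ x = v := by
    intro w hw x
    obtain ⟨hadj, hleaf⟩ := (hR w).mp hw
    obtain ⟨y, hy⟩ := Set.ncard_eq_one.mp hleaf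
    have hvy : v ∈ G.neighborSet w := G.adj_symm hadj
    rw [hy] at hvy
    have hyv : y = v := (Set.mem_singleton_iff.mp hvy).symm
    constructor
    · intro h
      have : x ∈ G.neighborSet w := h
      rw [hy, hyv] at this
      exact Set.mem_singleton_iff.mp this
    · intro h
      subst h
      exact G.adj_symm hadj
  have h := key G v R hpend Finset.univ
  rw [Finset.univ_inter, if_pos (Finset.mem_univ v)] at h
  exact h
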